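/- (Lemma 2, completeness part) The ring R = C(Y(Ω;B))|_{S_p} = {v ∈ C(S_p) : ∃ v̄ ∈ C(Y(Ω;B)) with v = v̄ ∘ δ} separates closed sets from points in S_p: for any closed A ⊆ S_p (in the L^p topology) and u₀ ∈ S_p \ A with dist(u₀, A) = ε > 0, the function v(u) = min(ε, ‖u − u₀‖_{L^p}^p) belongs to R. -/

import Mathlib

open MeasureTheory
open scoped BoundedContinuousFunction

/-- Lemma 2, completeness part: the ring `R = C(Y(Ω;B))|_{S_p}` separates
closed sets from points in `S_p`.  For a set `A ⊆ S_p` at `L^p`-distance (to the `p`-th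
power) at least `ε > 0` from `u₀ ∈ S_p`, the function `v(u) = min(ε, ‖u − u₀‖_{L^p}^p)`
belongs to `R`: it admits a weakly* continuous extension `v̄` to the dual
`L¹(Ω;C(B))* ⊇ Y(Ω;B)` satisfying `v = v̄ ∘ δ`, with `v̄(δ u₀) = 0` and `v̄ = ε` on `δ(A)`.
Here `δ = D` is the Dirac embedding `S_p → L¹(Ω;C(B))*`, `⟨D u, h⟩ = ∫_Ω h(x,u(x)) dx`. -/
theorem restriction_ring_separates
    {α : Type*} [MeasurableSpace α] (μ : Measure α) [IsFiniteMeasure μ]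
    {m : ℕ} (B : Set (Fin m → ℝ)) (hB : IsCompact B) (hBne : B.Nonempty)
    (p : ℝ) (hp : 1 ≤ p)
    (D : {u : α → B // Measurable u} → WeakDual ℝ (Lp (B →ᵇ ℝ) 1 μ))
    (hD : ∀ (u : {u : α → B // Measurable u}) (h : Lp (B →ᵇ ℝ) 1 μ),
      D u h = ∫ x, (h x) (u.1 x) ∂μ)
    (A : Set {u : α → B // Measurable u}) (u₀ : {u : α → B // Measurable u})
    (ε : ℝ) (hε : 0 < ε)
    (hdist : ∀ u ∈ A,
      ε ≤ ∫ x, ‖(u.1 x : Fin m → ℝ) - (u₀.1 x : Fin m → ℝ)‖ ^ p ∂μ) :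
    ∃ v' : WeakDual ℝ (Lp (B →ᵇ ℝ) 1 μ) → ℝ,
      Continuous v' ∧
      (∀ u : {u : α → B // Measurable u},
        v' (D u) = min ε (∫ x, ‖(u.1 x : Fin m → ℝ) - (u₀.1 x : Fin m → ℝ)‖ ^ p ∂μ)) ∧
      v' (D u₀) = 0 ∧
      ∀ u ∈ A, v' (D u) = ε := by
  haveI : CompactSpace B := isCompact_iff_compactSpace.mp hB
  have hpne : p ≠ 0 := by positivity
  -- the two-variable continuous function k (w, z) = ‖z - w‖^p
  set k : C(B × B, ℝ) := ⟨fun q => ‖(q.2 : Fin m → ℝ) - (q.1 : Fin m → ℝ)‖ ^ p, by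
    apply Continuous.rpow_const
    · exact ((continuous_subtype_val.comp continuous_snd).sub
        (continuous_subtype_val.comp continuous_fst)).norm
    · intro q; right; positivity⟩ with hk
  -- g w = (z ↦ ‖z - w‖^p) as a bounded continuous function
  set g : B → (B →ᵇ ℝ) := fun w =>
    ContinuousMap.linearIsometryBoundedOfCompact B ℝ ℝ (k.curry w) with hg
  have hgcont : Continuous g :=
    (ContinuousMap.linearIsometryBoundedOfCompact B ℝ ℝ).continuous.comp k.curry.continuous
  have hgapp : ∀ w z : B, g w z = ‖(z : Fin m → ℝ) - (w : Fin m → ℝ)‖ ^ p := fun w z => rfl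
  -- f x = g (u₀ x) is integrable
  set f : α → (B →ᵇ ℝ) := fun x => g (u₀.1 x) with hf
  have hfsm : StronglyMeasurable f := hgcont.comp_stronglyMeasurable u₀.2.stronglyMeasurable
  have hbd : ∃ C, ∀ w : B, ‖g w‖ ≤ C := by
    obtain ⟨C, hC⟩ := (isCompact_range hgcont).isBounded.subset_closedBall 0
    exact ⟨C, fun w => by simpa [dist_eq_norm] using hC ⟨w, rfl⟩⟩
  obtain ⟨C, hC⟩ := hbd
  have hfint : Integrable f μ := by
    refine ⟨hfsm.aestronglyMeasurable, ?_⟩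
    exact (hasFiniteIntegral_const C).mono' (Filter.Eventually.of_forall fun x => hC _)
  have hfmem : MemLp f 1 μ := memLp_one_iff_integrable.mpr hfint
  set h : Lp (B →ᵇ ℝ) 1 μ := hfmem.toLp f with hh
  -- key integral identity
  have key : ∀ u : {u : α → B // Measurable u},
      D u h = ∫ x, ‖(u.1 x : Fin m → ℝ) - (u₀.1 x : Fin m → ℝ)‖ ^ p ∂μ := by
    intro u
    rw [hD u h]
    refine integral_congr_ae ?_
    filter_upwards [hfmem.coeFn_toLp] with x hx
    rw [hx]
    exact hgapp _ _
  refine ⟨fun T => min ε (T h), ?_, ?_, ?_, ?_⟩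
  · exact continuous_const.min (WeakDual.eval_continuous h)
  · intro u; show min ε (D u h) = _; rw [key u]
  · show min ε (D u₀ h) = 0
    rw [key u₀]
    have : ∀ x, ‖(u₀.1 x : Fin m → ℝ) - (u₀.1 x : Fin m → ℝ)‖ ^ p = 0 := by
      intro x; simp [Real.zero_rpow hpne]
    simp only [this, integral_zero]
    exact min_eq_right hε.le
  · intro u hu
    show min ε (D u h) = ε
    rw [key u]
    exact min_eq_left (hdist u hu)
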